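/- arXiv:2603.28192 — 2 statements merged into one kernel-verified Lean document; each statement's English description precedes it below -/
import Mathlib

section
/- Let A be an n×n real matrix that is Hurwitz (all eigenvalues have negative real part) and let P be a real symmetric n×n matrix satisfying AᵀP + PA ⪯ 0 (negative semidefinite). Then P is positive semidefinite. -/
open Matrix NormedSpace Filter Topology Finset

attribute [local instance] Matrix.linftyOpNormedAddCommGroup Matrix.linftyOpNormedRing
  Matrix.linftyOpNormedAlgebra

lemma aux_scalar_decay {μ : ℂ} (hμ : μ.re < 0) (j : ℕ) :
    Tendsto (fun t : ℝ => Complex.exp (t * μ) * (t : ℂ) ^ j) atTop (𝓝 0) := by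
  rw [tendsto_zero_iff_norm_tendsto_zero]
  have hc : (0:ℝ) < -μ.re := by linarith
  have comp : Tendsto (fun t : ℝ => ((-μ.re) * t) ^ j * Real.exp (-((-μ.re) * t))) atTop (𝓝 0) :=
    (Real.tendsto_pow_mul_exp_neg_atTop_nhds_zero j).comp (tendsto_id.const_mul_atTop hc)
  have comp' : Tendsto (fun t : ℝ =>
      ((-μ.re)⁻¹) ^ j * (((-μ.re) * t) ^ j * Real.exp (-((-μ.re) * t)))) atTop (𝓝 0) := by
    simpa using comp.const_mul (((-μ.re)⁻¹) ^ j)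
  refine comp'.congr' ?_
  filter_upwards [eventually_ge_atTop (0:ℝ)] with t ht
  have hne : (-μ.re) ≠ 0 := ne_of_gt hc
  have h1 : ‖(t:ℂ)‖ = t := by rw [Complex.norm_real, Real.norm_of_nonneg ht]
  have h2 : -(-μ.re * t) = (↑t * μ).re := by simp; ring
  rw [norm_mul, Complex.norm_exp, norm_pow, h1, h2,
    mul_pow, ← mul_assoc, ← mul_assoc, ← mul_pow, inv_mul_cancel₀ hne, one_pow, one_mul, mul_comm]



-- powers of N kill generalized eigenvectors
lemma aux_pow_mulVec {n : ℕ} (Ac : Matrix (Fin n) (Fin n) ℂ) (μ : ℂ) (v : Fin n → ℂ) (j : ℕ) :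
    (Ac - μ • 1) ^ j *ᵥ v = ((Matrix.toLin' Ac - μ • 1 : Module.End ℂ (Fin n → ℂ)) ^ j) v := by
  induction j generalizing v with
  | zero => simp
  | succ j ih =>
    rw [pow_succ, pow_succ, ← mulVec_mulVec, Module.End.mul_apply]
    have h1 : (Ac - μ • 1) *ᵥ v = (Matrix.toLin' Ac - μ • 1 : Module.End ℂ (Fin n → ℂ)) v := by
      simp [sub_mulVec, Matrix.toLin'_apply, smul_mulVec]
    rw [h1, ih]

lemma aux_vec_decay {n : ℕ} (Ac : Matrix (Fin n) (Fin n) ℂ)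
    (hA : ∀ μ ∈ spectrum ℂ Ac, μ.re < 0) (v : Fin n → ℂ) :
    Tendsto (fun t : ℝ => exp ((t : ℂ) • Ac) *ᵥ v) atTop (𝓝 0) := by
  set f : Module.End ℂ (Fin n → ℂ) := Matrix.toLin' Ac with hf
  let S : Submodule ℂ (Fin n → ℂ) :=
    { carrier := {w | Tendsto (fun t : ℝ => exp ((t : ℂ) • Ac) *ᵥ w) atTop (𝓝 0)}
      add_mem' := fun {a b} ha hb => by
        simpa [mulVec_add] using ha.add hb
      zero_mem' := by simp [mulVec_zero, tendsto_const_nhds]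
      smul_mem' := fun c a ha => by
        simpa [mulVec_smul] using ha.const_smul c }
  have hS : v ∈ S := by
    have htop : (⊤ : Submodule ℂ (Fin n → ℂ)) ≤ S := by
      rw [← Module.End.iSup_maxGenEigenspace_eq_top f]
      refine iSup_le fun μ => fun w hw => ?_
      obtain ⟨k, hk⟩ := (f.mem_maxGenEigenspace μ w).mp hw
      by_cases hw0 : w = 0
      · simpa [hw0] using S.zero_mem
      -- μ is an eigenvalue
      have hμ : μ.re < 0 := by
        refine hA μ ?_
        have hgen : f.HasGenEigenvalue μ k := by
          rw [Module.End.hasGenEigenvalue_iff]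
          intro hbot
          have : w ∈ (f.genEigenspace μ) (k : ℕ∞) :=
            (Module.End.mem_genEigenspace_nat).mpr (by simpa using hk)
          rw [hbot] at this
          exact hw0 (by simpa using this)
        have heig := Module.End.hasEigenvalue_of_hasGenEigenvalue hgen
        have := heig.mem_spectrum
        rwa [show f = Matrix.toLinAlgEquiv' Ac from rfl, AlgEquiv.spectrum_eq] at this
      -- decay on the generalized eigenspace
      show Tendsto _ atTop (𝓝 0)
      have key : ∀ t : ℝ, exp ((t : ℂ) • Ac) *ᵥ w =
          ∑ j ∈ range k, (Complex.exp (t * μ) * (t:ℂ) ^ j * (((j : ℕ).factorial : ℂ))⁻¹) •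
            ((Ac - μ • 1) ^ j *ᵥ w) := by
        intro t
        have hsplit : (t : ℂ) • Ac = (↑t * μ) • (1 : Matrix (Fin n) (Fin n) ℂ)
            + (t : ℂ) • (Ac - μ • 1) := by
          rw [smul_sub, smul_smul]; abel
        have hcomm : Commute ((↑t * μ) • (1 : Matrix (Fin n) (Fin n) ℂ))
            ((t : ℂ) • (Ac - μ • 1)) := by
          rw [← Algebra.algebraMap_eq_smul_one]
          exact (Algebra.commutes _ _)
        rw [hsplit, Matrix.exp_add_of_commute _ _ hcomm]
        erw [← Algebra.algebraMap_eq_smul_one, ← algebraMap_exp_comm (𝕂 := ℂ) (𝔸 := Matrix (Fin n) (Fin n) ℂ),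
          Algebra.algebraMap_eq_smul_one, smul_one_mul, smul_mulVec]
        -- now expand exp of the nilpotent-ish part applied to w
        have hview : exp ((t:ℂ) • (Ac - μ • 1)) *ᵥ w =
            ∑ j ∈ range k, ((((j : ℕ).factorial : ℂ))⁻¹ * (t:ℂ) ^ j) • ((Ac - μ • 1) ^ j *ᵥ w) := by
          let φ : Matrix (Fin n) (Fin n) ℂ →ₗ[ℂ] (Fin n → ℂ) :=
            { toFun := fun M => M *ᵥ w
              map_add' := fun M M' => add_mulVec M M' w
              map_smul' := fun c M => smul_mulVec c M w }
          have hφc : Continuous φ := φ.continuous_of_finiteDimensional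
          have hsum := (expSeries_summable' (𝕂 := ℂ) ((t:ℂ) • (Ac - μ • 1))).hasSum
          have h2 := (hsum.map φ.toAddMonoidHom hφc).tsum_eq
          simp only [LinearMap.toAddMonoidHom_coe, Function.comp_def] at h2
          rw [exp_eq_tsum (𝕂 := ℂ)]
          show φ (∑' (j : ℕ), (((j : ℕ).factorial : ℂ))⁻¹ • ((t:ℂ) • (Ac - μ • 1)) ^ j) = _
          erw [← h2]
          refine tsum_eq_sum ?_ |>.trans (Finset.sum_congr rfl fun j hj => ?_)
          · intro j hj
            rw [Finset.mem_range, not_lt] at hj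
            show ((((j : ℕ).factorial : ℂ))⁻¹ • ((t:ℂ) • (Ac - μ • 1)) ^ j) *ᵥ w = 0
            have hzero : (Ac - μ • 1) ^ j *ᵥ w = 0 := by
              rw [aux_pow_mulVec]
              have : ((f - μ • 1) ^ k) w = 0 := by simpa using hk
              rw [show j = (j - k) + k by omega, pow_add, Module.End.mul_apply, this, map_zero]
            rw [smul_pow, smul_mulVec, smul_mulVec, hzero, smul_zero, smul_zero]
          · show ((((j : ℕ).factorial : ℂ))⁻¹ • ((t:ℂ) • (Ac - μ • 1)) ^ j) *ᵥ w = _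
            rw [smul_pow, smul_mulVec, smul_mulVec, smul_smul]
        rw [hview, Finset.smul_sum]
        refine Finset.sum_congr rfl fun j hj => ?_
        rw [smul_smul, ← Complex.exp_eq_exp_ℂ]; ring_nf
      rw [show (fun t : ℝ => exp ((t : ℂ) • Ac) *ᵥ w) = fun t : ℝ =>
          ∑ j ∈ range k, (Complex.exp (t * μ) * (t:ℂ) ^ j * (((j : ℕ).factorial : ℂ))⁻¹) •
            ((Ac - μ • 1) ^ j *ᵥ w) from funext key]
      rw [show (0 : Fin n → ℂ) = ∑ j ∈ range k, (0 : Fin n → ℂ) by simp]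
      refine tendsto_finset_sum _ fun j hj => ?_
      have := ((aux_scalar_decay hμ j).mul_const (((j : ℕ).factorial : ℂ))⁻¹).smul_const
        ((Ac - μ • 1) ^ j *ᵥ w)
      simpa using this
    exact htop Submodule.mem_top
  exact hS


-- bridge
lemma aux_bridge {n : ℕ} (A : Matrix (Fin n) (Fin n) ℝ) (t : ℝ) :
    (exp (t • A)).map (Complex.ofReal ·) = exp ((t : ℂ) • A.map (Complex.ofReal ·)) := by
  have hc : Continuous (Complex.ofRealHom.mapMatrix :
      Matrix (Fin n) (Fin n) ℝ →+* Matrix (Fin n) (Fin n) ℂ) := by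
    apply continuous_pi; intro i; apply continuous_pi; intro j
    exact Complex.continuous_ofReal.comp ((continuous_apply j).comp (continuous_apply i))
  have h1 := map_exp (Complex.ofRealHom.mapMatrix :
      Matrix (Fin n) (Fin n) ℝ →+* Matrix (Fin n) (Fin n) ℂ) hc (t • A)
  have h2 : (Complex.ofRealHom.mapMatrix (t • A) : Matrix (Fin n) (Fin n) ℂ)
      = (t : ℂ) • A.map (Complex.ofReal ·) := by
    ext i j
    simp [RingHom.mapMatrix_apply, Matrix.map_apply]
  have h3 : (exp : Matrix (Fin n) (Fin n) ℂ → _) = exp := rfl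
  calc (exp (t • A)).map (Complex.ofReal ·)
      = Complex.ofRealHom.mapMatrix (exp (t • A)) := rfl
    _ = exp (Complex.ofRealHom.mapMatrix (t • A)) := h1
    _ = exp ((t : ℂ) • A.map (Complex.ofReal ·)) := by rw [h2, h3]

-- quadratic identity
lemma aux_quad {m : ℕ} (A P : Matrix (Fin m) (Fin m) ℝ) (y : Fin m → ℝ) :
    (A *ᵥ y) ⬝ᵥ (P *ᵥ y) + y ⬝ᵥ (P *ᵥ (A *ᵥ y)) = y ⬝ᵥ ((Aᵀ * P + P * A) *ᵥ y) := by
  rw [add_mulVec, dotProduct_add, ← mulVec_mulVec, ← mulVec_mulVec, mulVec_transpose,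
    dotProduct_comm (A *ᵥ y), dotProduct_mulVec (P *ᵥ y), dotProduct_comm y ((P *ᵥ y) ᵥ* A)]

/-- A real square matrix is Hurwitz if all its (complex) eigenvalues have
strictly negative real part. -/
def IsHurwitz {n : ℕ} (A : Matrix (Fin n) (Fin n) ℝ) : Prop :=
  ∀ μ ∈ spectrum ℂ (A.map (Complex.ofReal ·)), μ.re < 0

/-- If `A` is Hurwitz and `P` is symmetric with `AᵀP + PA ⪯ 0`, then `P ⪰ 0`. -/
theorem stmt_0 {n : ℕ} (A P : Matrix (Fin n) (Fin n) ℝ)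
    (hA : IsHurwitz A) (hP : P.IsSymm)
    (hLyap : (-(Aᵀ * P + P * A)).PosSemidef) :
    P.PosSemidef := by
  refine Matrix.PosSemidef.of_dotProduct_mulVec_nonneg ?_ ?_
  · rw [Matrix.IsHermitian, conjTranspose, Matrix.IsSymm] at *
    exact (Matrix.conjTranspose_eq_transpose_of_trivial P).trans hP
  intro x
  -- V and limits
  set y : ℝ → (Fin n → ℝ) := fun t => exp (t • A) *ᵥ x with hy
  have hylim : Tendsto y atTop (𝓝 0) := by
    rw [tendsto_pi_nhds]
    intro i
    have hcomplex := aux_vec_decay (A.map (Complex.ofReal ·)) hA (fun j => (x j : ℂ))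
    have hcoord : Tendsto (fun t : ℝ => (exp ((t:ℂ) • A.map (Complex.ofReal ·)) *ᵥ
        (fun j => (x j : ℂ))) i) atTop (𝓝 0) := by
      have := (continuous_apply i).tendsto (0 : Fin n → ℂ)
      simpa [Function.comp_def] using this.comp hcomplex
    have heq : ∀ t : ℝ, ((y t i : ℝ) : ℂ) = (exp ((t:ℂ) • A.map (Complex.ofReal ·)) *ᵥ
        (fun j => (x j : ℂ))) i := by
      intro t
      rw [← aux_bridge]
      simp [hy, mulVec, dotProduct, Matrix.map_apply]
    have : Tendsto (fun t => ((y t i : ℝ) : ℂ)) atTop (𝓝 0) := by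
      simpa [heq] using hcoord
    have := (Complex.continuous_re.tendsto 0).comp this
    simpa [Function.comp_def] using this
  set V : ℝ → ℝ := fun t => y t ⬝ᵥ (P *ᵥ y t) with hV
  have hVlim : Tendsto V atTop (𝓝 0) := by
    have hcont : Continuous (fun v : Fin n → ℝ => v ⬝ᵥ (P *ᵥ v)) := by
      simp only [dotProduct, mulVec]
      exact continuous_finset_sum _ fun i _ => ((continuous_apply i).mul
        (continuous_finset_sum _ fun j _ => (continuous_const.mul (continuous_apply j))))
    have := (hcont.tendsto 0).comp hylim
    simpa [mulVec_zero, dotProduct_zero, Function.comp_def] using this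
  -- derivative of V
  have hyd : ∀ (t : ℝ) (i : Fin n), HasDerivAt (fun u => y u i) ((A *ᵥ y t) i) t := by
    intro t i
    have hM : HasDerivAt (fun u : ℝ => exp (u • A)) (A * exp (t • A)) t :=
      hasDerivAt_exp_smul_const' A t
    let φ : Matrix (Fin n) (Fin n) ℝ →ₗ[ℝ] ℝ :=
      { toFun := fun M => (M *ᵥ x) i
        map_add' := fun M M' => by simp [add_mulVec]
        map_smul' := fun c M => by simp [smul_mulVec] }
    have hd := (φ.toContinuousLinearMap.hasFDerivAt).comp_hasDerivAt t hM
    have : (φ.toContinuousLinearMap (A * exp (t • A))) = (A *ᵥ y t) i := by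
      show ((A * exp (t • A)) *ᵥ x) i = (A *ᵥ y t) i
      rw [← mulVec_mulVec]
    replace hd := hd.congr_deriv this
    exact hd
  have hderiv : ∀ t : ℝ, HasDerivAt V (y t ⬝ᵥ ((Aᵀ * P + P * A) *ᵥ y t)) t := by
    intro t
    have hsum : HasDerivAt (fun u => ∑ i, y u i * ∑ j, P i j * y u j)
        (∑ i, ((A *ᵥ y t) i * ∑ j, P i j * y t j + y t i * ∑ j, P i j * (A *ᵥ y t) j)) t := by
      refine HasDerivAt.fun_sum fun i _ => ?_
      exact (hyd t i).mul (HasDerivAt.fun_sum fun j _ => (hyd t j).const_mul (P i j))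
    have heqf : (fun u => ∑ i, y u i * ∑ j, P i j * y u j) = V := by
      funext u
      simp [hV, dotProduct, mulVec]
    have heqd : (∑ i, ((A *ᵥ y t) i * ∑ j, P i j * y t j + y t i * ∑ j, P i j * (A *ᵥ y t) j))
        = y t ⬝ᵥ ((Aᵀ * P + P * A) *ᵥ y t) := by
      rw [← aux_quad A P (y t)]
      rw [Finset.sum_add_distrib]
      congr 1 <;> simp [dotProduct, mulVec]
    rw [heqf, heqd] at hsum
    exact hsum
  have hanti : Antitone V := by
    refine antitone_of_deriv_nonpos (fun t => (hderiv t).differentiableAt) fun t => ?_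
    rw [(hderiv t).deriv]
    have h := hLyap.dotProduct_mulVec_nonneg (y t)
    rw [star_trivial, neg_mulVec, dotProduct_neg] at h
    linarith
  have hV0 : V 0 = x ⬝ᵥ (P *ᵥ x) := by
    simp [hV, hy, exp_zero, one_mulVec]
  have hge : (0 : ℝ) ≤ V 0 := by
    refine le_of_tendsto hVlim ?_
    filter_upwards [eventually_ge_atTop (0:ℝ)] with t ht
    exact hanti ht
  rw [hV0] at hge
  simpa using hge
end

section
/- Let A, B, C, D be real matrices of compatible sizes, λ ∈ ℝ with D − λI invertible, P symmetric, and suppose the block matrix [[AᵀP + PA − CᵀC, PB − Cᵀ(D−λI)], [BᵀP − (D−λI)ᵀC, −(D−λI)ᵀ(D−λI) + r²I]] ⪯ 0 for some r > 0. Then XᵀP + PX ⪯ 0 where X = A − B(D−λI)^{-1}C. -/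
open Matrix

/-- Schur complement reduction: if the indicated block matrix is `⪯ 0` and
`D - λI` is invertible, then `XᵀP + PX ⪯ 0` for `X = A - B(D-λI)⁻¹C`. -/
theorem stmt_11 {n m : ℕ} (A : Matrix (Fin n) (Fin n) ℝ)
    (B : Matrix (Fin n) (Fin m) ℝ) (C : Matrix (Fin m) (Fin n) ℝ)
    (D : Matrix (Fin m) (Fin m) ℝ) (P : Matrix (Fin n) (Fin n) ℝ)
    (lam r : ℝ) (hr : 0 < r) (hP : P.IsSymm)
    (hInv : IsUnit (D - lam • (1 : Matrix (Fin m) (Fin m) ℝ)))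
    (hBlock : (-(Matrix.fromBlocks
        (Aᵀ * P + P * A - Cᵀ * C)
        (P * B - Cᵀ * (D - lam • (1 : Matrix (Fin m) (Fin m) ℝ)))
        (Bᵀ * P - (D - lam • (1 : Matrix (Fin m) (Fin m) ℝ))ᵀ * C)
        (-((D - lam • (1 : Matrix (Fin m) (Fin m) ℝ))ᵀ
            * (D - lam • (1 : Matrix (Fin m) (Fin m) ℝ)))
          + r ^ 2 • (1 : Matrix (Fin m) (Fin m) ℝ)))).PosSemidef) :
    (-((A - B * (D - lam • (1 : Matrix (Fin m) (Fin m) ℝ))⁻¹ * C)ᵀ * P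
        + P * (A - B * (D - lam • (1 : Matrix (Fin m) (Fin m) ℝ))⁻¹ * C))).PosSemidef := by
  set E : Matrix (Fin m) (Fin m) ℝ := D - lam • (1 : Matrix (Fin m) (Fin m) ℝ) with hE
  set F : Matrix (Fin m) (Fin n) ℝ := E⁻¹ * C with hF
  have hdet : IsUnit E.det := (Matrix.isUnit_iff_isUnit_det E).mp hInv
  have hEF : E * F = C := by
    rw [hF, ← Matrix.mul_assoc, Matrix.mul_nonsing_inv E hdet, Matrix.one_mul]
  have hFEC : Fᵀ * (Eᵀ * C) = Cᵀ * C := by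
    rw [← Matrix.mul_assoc, ← Matrix.transpose_mul, hEF]
  set L : Matrix (Fin n ⊕ Fin m) (Fin n) ℝ := fromRows (1 : Matrix (Fin n) (Fin n) ℝ) (-F)
    with hL
  set M : Matrix (Fin n ⊕ Fin m) (Fin n ⊕ Fin m) ℝ :=
    Matrix.fromBlocks (Aᵀ * P + P * A - Cᵀ * C) (P * B - Cᵀ * E)
      (Bᵀ * P - Eᵀ * C) (-(Eᵀ * E) + r ^ 2 • (1 : Matrix (Fin m) (Fin m) ℝ)) with hM
  have hcongr : (Lᵀ * (-M) * L).PosSemidef := by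
    have := hBlock.conjTranspose_mul_mul_same L
    rw [Matrix.conjTranspose_eq_transpose_of_trivial] at this
    simpa [Matrix.conjTranspose, Matrix.transpose] using this
  have hpsd2 : (r ^ 2 • (Fᵀ * F)).PosSemidef := by
    have h := Matrix.posSemidef_conjTranspose_mul_self (r • F)
    have : (r • F)ᴴ * (r • F) = r ^ 2 • (Fᵀ * F) := by
      simp [Matrix.conjTranspose_eq_transpose_of_trivial, Matrix.smul_mul, Matrix.mul_smul,
        smul_smul, sq, Matrix.transpose_smul]
    rwa [this] at h
  have key : -((A - B * F)ᵀ * P + P * (A - B * F))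
      = Lᵀ * (-M) * L + r ^ 2 • (Fᵀ * F) := by
    rw [hL, hM, Matrix.transpose_fromRows, Matrix.fromBlocks_neg,
      Matrix.fromCols_mul_fromBlocks, Matrix.fromCols_mul_fromRows]
    simp only [Matrix.transpose_one, Matrix.transpose_neg, Matrix.neg_mul, Matrix.mul_neg,
      Matrix.one_mul, Matrix.mul_one, Matrix.transpose_sub, Matrix.transpose_mul,
      Matrix.transpose_add, Matrix.transpose_smul, Matrix.sub_mul, Matrix.mul_sub,
      Matrix.add_mul, Matrix.mul_add, Matrix.smul_mul, Matrix.mul_smul, Matrix.mul_assoc,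
      hEF, hFEC, smul_neg, neg_one_smul, smul_smul,
      neg_neg, neg_sub, neg_add_rev, sub_eq_add_neg]
    abel
  rw [show (A - B * E⁻¹ * C) = A - B * F by rw [hF, Matrix.mul_assoc], key]
  exact hcongr.add hpsd2
end
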